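/- For all positive integers q, n, the infinite product ∏_{k=1}^{∞} (F_{(2n-1)(2k+2q)} + F_{2q(2n-1)})/(F_{(2n-1)(2k+2q)} - F_{2q(2n-1)}) converges and equals ∏_{k=1}^{q} (F_{(2n-1)(2k-1)} · L_{(2n-1)·2k})/(L_{(2n-1)(2k-1)} · F_{(2n-1)·2k}). -/

import Mathlib

open goldenRatio Real

def lucas : ℕ → ℕ
  | 0 => 2
  | 1 => 1
  | n + 2 => lucas n + lucas (n + 1)

lemma lucas_pos : ∀ j, 0 < lucas j
  | 0 => by simp [lucas]
  | 1 => by simp [lucas]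
  | (j+2) => by rw [lucas]; exact Nat.add_pos_left (lucas_pos j) _

lemma lucas_binet : ∀ j, (lucas j : ℝ) = φ ^ j + ψ ^ j
  | 0 => by norm_num [lucas]
  | 1 => by norm_num [lucas, goldenRatio_add_goldenConj]
  | (j+2) => by
      rw [lucas]
      push_cast
      rw [lucas_binet j, lucas_binet (j+1)]
      have h1 : φ ^ (j+2) = φ ^ j * φ ^ 2 := by ring
      have h2 : ψ ^ (j+2) = ψ ^ j * ψ ^ 2 := by ring
      rw [h1, h2, goldenRatio_sq, goldenConj_sq]; ring

lemma fib_binet (j : ℕ) : (Nat.fib j : ℝ) = (φ ^ j - ψ ^ j) / √5 := Real.coe_fib_eq j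

lemma sqrt5_ne : (√5 : ℝ) ≠ 0 := by positivity

lemma key_even {t : ℕ} (ht : t % 2 = 0) : φ ^ t * ψ ^ t = 1 := by
  rw [← mul_pow, goldenRatio_mul_goldenConj, ← Nat.div_add_mod t 2, ht, Nat.add_zero, pow_mul]
  norm_num

lemma key_odd {t : ℕ} (ht : t % 2 = 1) : φ ^ t * ψ ^ t = -1 := by
  rw [← mul_pow, goldenRatio_mul_goldenConj, ← Nat.div_add_mod t 2, ht, pow_add, pow_mul]
  norm_num


lemma alg_add_even (A B x y s : ℝ) (hs : s ≠ 0) (key : x * y = 1) :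
    (A * x * x - B * y * y) / s + (A - B) / s = (A * x - B * y) / s * (x + y) := by
  field_simp; linear_combination (B - A) * key

lemma alg_sub_even (A B x y s : ℝ) (hs : s ≠ 0) (key : x * y = 1) :
    (A * x * x - B * y * y) / s - (A - B) / s = (A * x + B * y) * ((x - y) / s) := by
  field_simp; linear_combination (A - B) * key

lemma alg_add_odd (A B x y s : ℝ) (hs : s ≠ 0) (key : x * y = -1) :
    (A * x * x - B * y * y) / s + (A - B) / s = (A * x + B * y) * ((x - y) / s) := by
  field_simp; linear_combination (A - B) * key

lemma alg_sub_odd (A B x y s : ℝ) (hs : s ≠ 0) (key : x * y = -1) :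
    (A * x * x - B * y * y) / s - (A - B) / s = (A * x - B * y) / s * (x + y) := by
  field_simp; linear_combination (B - A) * key

lemma add_even (d t : ℕ) (ht : t % 2 = 0) :
    (Nat.fib (d + 2*t) : ℝ) + Nat.fib d = Nat.fib (d + t) * lucas t := by
  rw [fib_binet, fib_binet, fib_binet, lucas_binet,
    show d + 2*t = d + t + t by ring, pow_add, pow_add, pow_add, pow_add]
  exact alg_add_even _ _ _ _ _ sqrt5_ne (key_even ht)

lemma sub_even (d t : ℕ) (ht : t % 2 = 0) :
    (Nat.fib (d + 2*t) : ℝ) - Nat.fib d = lucas (d + t) * Nat.fib t := by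
  rw [fib_binet, fib_binet, fib_binet, lucas_binet,
    show d + 2*t = d + t + t by ring, pow_add, pow_add, pow_add, pow_add]
  exact alg_sub_even _ _ _ _ _ sqrt5_ne (key_even ht)

lemma add_odd (d t : ℕ) (ht : t % 2 = 1) :
    (Nat.fib (d + 2*t) : ℝ) + Nat.fib d = lucas (d + t) * Nat.fib t := by
  rw [fib_binet, fib_binet, fib_binet, lucas_binet,
    show d + 2*t = d + t + t by ring, pow_add, pow_add, pow_add, pow_add]
  exact alg_add_odd _ _ _ _ _ sqrt5_ne (key_odd ht)

lemma sub_odd (d t : ℕ) (ht : t % 2 = 1) :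
    (Nat.fib (d + 2*t) : ℝ) - Nat.fib d = Nat.fib (d + t) * lucas t := by
  rw [fib_binet, fib_binet, fib_binet, lucas_binet,
    show d + 2*t = d + t + t by ring, pow_add, pow_add, pow_add, pow_add]
  exact alg_sub_odd _ _ _ _ _ sqrt5_ne (key_odd ht)
noncomputable section
open goldenRatio Real Filter Finset

def Gr (m j : ℕ) : ℝ := (Nat.fib (m*j) : ℝ) / (lucas (m*j) : ℝ)

def Hr (m j : ℕ) : ℝ := Gr m (2*j-1) / Gr m (2*j)

def fr (m q k : ℕ) : ℝ :=
  ((Nat.fib (m*(2*(k+1)+2*q)) : ℝ) + (Nat.fib (2*q*m) : ℝ)) /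
    ((Nat.fib (m*(2*(k+1)+2*q)) : ℝ) - (Nat.fib (2*q*m) : ℝ))

lemma lucR_pos (j : ℕ) : (0:ℝ) < (lucas j : ℝ) := by exact_mod_cast lucas_pos j

lemma fibR_pos {j : ℕ} (hj : 1 ≤ j) : (0:ℝ) < (Nat.fib j : ℝ) := by
  have : 0 < Nat.fib j := Nat.fib_pos.mpr hj
  exact_mod_cast this

lemma Gr_pos {m j : ℕ} (hm : 1 ≤ m) (hj : 1 ≤ j) : 0 < Gr m j :=
  div_pos (fibR_pos (Nat.mul_pos hm hj)) (lucR_pos _)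

lemma Hr_pos {m j : ℕ} (hm : 1 ≤ m) (hj : 1 ≤ j) : 0 < Hr m j :=
  div_pos (Gr_pos hm (by omega)) (Gr_pos hm (by omega))

lemma fr_odd {m q : ℕ} (hm : m % 2 = 1) (k : ℕ) (hk : (k+1) % 2 = 1) :
    fr m q k = Gr m (k+1) / Gr m (k+1+2*q) := by
  have hm1 : 1 ≤ m := by omega
  have ht : (m*(k+1)) % 2 = 1 := by rw [Nat.mul_mod, hm, hk]
  unfold fr Gr
  rw [show m*(2*(k+1)+2*q) = 2*q*m + 2*(m*(k+1)) by ring,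
    add_odd _ _ ht, sub_odd _ _ ht,
    show 2*q*m + m*(k+1) = m*(k+1+2*q) by ring]
  have h1 := (fibR_pos (j := m*(k+1)) (Nat.mul_pos hm1 (by omega))).ne'
  have h2 := (fibR_pos (j := m*(k+1+2*q)) (Nat.mul_pos hm1 (by omega))).ne'
  have h3 := (lucR_pos (m*(k+1))).ne'
  have h4 := (lucR_pos (m*(k+1+2*q))).ne'
  field_simp <;> ring

lemma fr_even {m q : ℕ} (hm : m % 2 = 1) (k : ℕ) (hk : (k+1) % 2 = 0) :
    fr m q k = Gr m (k+1+2*q) / Gr m (k+1) := by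
  have hm1 : 1 ≤ m := by omega
  have ht : (m*(k+1)) % 2 = 0 := by rw [Nat.mul_mod, hm, hk]
  unfold fr Gr
  rw [show m*(2*(k+1)+2*q) = 2*q*m + 2*(m*(k+1)) by ring,
    add_even _ _ ht, sub_even _ _ ht,
    show 2*q*m + m*(k+1) = m*(k+1+2*q) by ring]
  have h1 := (fibR_pos (j := m*(k+1)) (Nat.mul_pos hm1 (by omega))).ne'
  have h2 := (fibR_pos (j := m*(k+1+2*q)) (Nat.mul_pos hm1 (by omega))).ne'
  have h3 := (lucR_pos (m*(k+1))).ne'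
  have h4 := (lucR_pos (m*(k+1+2*q))).ne'
  field_simp <;> ring

lemma fr_pair {m q : ℕ} (hm : m % 2 = 1) (j : ℕ) :
    fr m q (2*j) * fr m q (2*j+1) = Hr m (j+1) / Hr m (j+1+q) := by
  have hm1 : 1 ≤ m := by omega
  rw [fr_odd hm (2*j) (by omega), fr_even hm (2*j+1) (by omega)]
  unfold Hr
  rw [show 2*(j+1)-1 = 2*j+1 by omega, show 2*(j+1) = 2*j+1+1 by omega,
    show 2*(j+1+q)-1 = 2*j+1+2*q by omega, show 2*(j+1+q) = 2*j+1+1+2*q by omega]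
  have h1 := (Gr_pos (m := m) (j := 2*j+1) hm1 (by omega)).ne'
  have h2 := (Gr_pos (m := m) (j := 2*j+1+1) hm1 (by omega)).ne'
  have h3 := (Gr_pos (m := m) (j := 2*j+1+2*q) hm1 (by omega)).ne'
  have h4 := (Gr_pos (m := m) (j := 2*j+1+1+2*q) hm1 (by omega)).ne'
  field_simp <;> ring

lemma partial_prod {m q : ℕ} (hm : m % 2 = 1) (M : ℕ) :
    ∏ i ∈ range (2*M), fr m q i = ∏ j ∈ range M, (Hr m (j+1) / Hr m (j+1+q)) := by
  induction M with
  | zero => simp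
  | succ M ih =>
      rw [show 2*(M+1) = 2*M+1+1 by ring, prod_range_succ, prod_range_succ,
        prod_range_succ, ih, mul_assoc, fr_pair hm M]

lemma telescope {m q : ℕ} (hm : 1 ≤ m) (M : ℕ) :
    ∏ j ∈ range M, (Hr m (j+1) / Hr m (j+1+q)) =
      (∏ j ∈ range q, Hr m (j+1)) / (∏ j ∈ range q, Hr m (M+j+1)) := by
  rw [Finset.prod_div_distrib]
  have hD : ∏ j ∈ range M, Hr m (j+1+q) = ∏ j ∈ range M, Hr m (q+j+1) :=
    Finset.prod_congr rfl fun j _ => by rw [show j+1+q = q+j+1 by omega]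
  have hA : ∏ j ∈ range (M+q), Hr m (j+1)
      = (∏ j ∈ range M, Hr m (j+1)) * ∏ j ∈ range q, Hr m (M+j+1) := by
    rw [prod_range_add]
  have hB : ∏ j ∈ range (M+q), Hr m (j+1)
      = (∏ j ∈ range q, Hr m (j+1)) * ∏ j ∈ range M, Hr m (q+j+1) := by
    rw [show M+q = q+M by omega, prod_range_add]
  have hne1 : (∏ j ∈ range M, Hr m (q+j+1)) ≠ 0 :=
    (Finset.prod_pos fun j _ => Hr_pos hm (by omega)).ne'
  have hne2 : (∏ j ∈ range q, Hr m (M+j+1)) ≠ 0 :=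
    (Finset.prod_pos fun j _ => Hr_pos hm (by omega)).ne'
  rw [hD, div_eq_div_iff hne1 hne2]
  linear_combination hB - hA

lemma Gr_tendsto {m : ℕ} (hm : 1 ≤ m) :
    Tendsto (fun j => Gr m j) atTop (nhds (√5)⁻¹) := by
  set v : ℝ := (ψ/φ)^m with hv
  have habs : |v| < 1 := by
    rw [hv, abs_pow]
    apply pow_lt_one₀ (abs_nonneg _) _ (by omega)
    rw [abs_div, abs_of_pos goldenRatio_pos, div_lt_one goldenRatio_pos]
    have h1 : |ψ| < 1 := abs_lt.mpr ⟨neg_one_lt_goldenConj, by linarith [goldenConj_neg]⟩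
    linarith [one_lt_goldenRatio]
  have hGeq : ∀ j, Gr m j = (1 - v^j)/(√5 * (1 + v^j)) := by
    intro j
    have hphi : (0:ℝ) < φ^(m*j) := pow_pos goldenRatio_pos _
    have hpsi : ψ^(m*j) = φ^(m*j) * v^j := by
      rw [hv, ← pow_mul, ← mul_pow]
      rw [mul_div_assoc', mul_div_cancel_left₀ _ goldenRatio_ne_zero]
    have h1v : 0 < 1 + v^j := by
      have hl : (0:ℝ) < φ^(m*j) * (1 + v^j) := by
        have := lucR_pos (m*j)
        rw [lucas_binet, hpsi] at this
        linarith
      nlinarith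
    unfold Gr
    rw [fib_binet, lucas_binet, hpsi]
    have hden1 : (0:ℝ) < √5 * (φ^(m*j) + φ^(m*j)*v^j) := by
      have h2 := mul_pos hphi h1v
      have h3 : (0:ℝ) < √5 := by positivity
      nlinarith
    have hden2 : (0:ℝ) < √5 * (1+v^j) := by
      have h3 : (0:ℝ) < √5 := by positivity
      nlinarith
    rw [div_div, div_eq_div_iff hden1.ne' hden2.ne']
    ring
  have h0 : Tendsto (fun j : ℕ => v^j) atTop (nhds 0) :=
    tendsto_pow_atTop_nhds_zero_of_abs_lt_one habs
  have : Tendsto (fun j : ℕ => (1 - v^j)/(√5 * (1 + v^j))) atTop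
      (nhds ((1 - 0)/(√5 * (1 + 0)))) := by
    apply Tendsto.div (tendsto_const_nhds.sub h0)
      ((tendsto_const_nhds.add h0).const_mul _)
    simp [sqrt5_ne]
  have heq : ((1:ℝ) - 0)/(√5 * (1 + 0)) = (√5)⁻¹ := by
    rw [sub_zero, add_zero, mul_one, one_div]
  rw [heq] at this
  exact this.congr fun j => (hGeq j).symm

lemma Hr_tail_tendsto {m q : ℕ} (hm : 1 ≤ m) :
    Tendsto (fun M => ∏ j ∈ range q, Hr m (M+j+1)) atTop (nhds 1) := by
  have h1 : (1:ℝ) = ∏ _j ∈ range q, (1:ℝ) := by simp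
  rw [h1]
  apply tendsto_finset_prod
  intro j _
  have hnum : Tendsto (fun M => Gr m (2*M + (2*j+1))) atTop (nhds (√5)⁻¹) :=
    (Gr_tendsto hm).comp (tendsto_atTop_mono (fun M => by simp only [id_eq]; omega) tendsto_id)
  have hden : Tendsto (fun M => Gr m (2*M + (2*j+2))) atTop (nhds (√5)⁻¹) :=
    (Gr_tendsto hm).comp (tendsto_atTop_mono (fun M => by simp only [id_eq]; omega) tendsto_id)
  have : Tendsto (fun M => Gr m (2*M + (2*j+1)) / Gr m (2*M + (2*j+2))) atTop
      (nhds ((√5)⁻¹ / (√5)⁻¹)) := hnum.div hden (inv_ne_zero sqrt5_ne)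
  rw [div_self (inv_ne_zero sqrt5_ne)] at this
  apply this.congr
  intro M
  unfold Hr
  rw [show 2*(M+j+1)-1 = 2*M+(2*j+1) by omega, show 2*(M+j+1) = 2*M+(2*j+2) by omega]

lemma fib_pow_le (k : ℕ) : 2^k ≤ Nat.fib (2*k+2) := by
  induction k with
  | zero => simp
  | succ k ih =>
      have h1 : Nat.fib (2*(k+1)+2) = Nat.fib (2*k+2) + Nat.fib (2*k+3) := by
        rw [show 2*(k+1)+2 = (2*k+2)+2 by ring, Nat.fib_add_two]
      have h2 : Nat.fib (2*k+2) ≤ Nat.fib (2*k+3) := Nat.fib_mono (by omega)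
      calc 2^(k+1) = 2^k + 2^k := by ring
        _ ≤ Nat.fib (2*k+2) + Nat.fib (2*k+3) := by omega
        _ = Nat.fib (2*(k+1)+2) := h1.symm

lemma fib_gap {m q : ℕ} (hm : 1 ≤ m) (hq : 1 ≤ q) (k : ℕ) :
    Nat.fib (2*q*m) + 2^k ≤ Nat.fib (m*(2*(k+1)+2*q)) := by
  set y := 2*q*m with hy
  set d := 2*m*(k+1) with hd
  have hy2 : 2 ≤ y := by
    have : 2*1*1 ≤ 2*q*m := Nat.mul_le_mul (Nat.mul_le_mul le_rfl hq) hm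
    omega
  have hdk : 2*k+2 ≤ d := by
    have : 2*1*(k+1) ≤ 2*m*(k+1) := Nat.mul_le_mul (Nat.mul_le_mul le_rfl hm) le_rfl
    omega
  have hidx : m*(2*(k+1)+2*q) = y + d := by rw [hy, hd]; ring
  have h1 : Nat.fib (y+d) = Nat.fib y * Nat.fib (d-1) + Nat.fib (y+1) * Nat.fib d := by
    have h := Nat.fib_add y (d-1)
    rw [show y + (d-1) + 1 = y + d by omega, show (d-1)+1 = d by omega] at h
    exact h
  have h2 : Nat.fib y + 1 ≤ Nat.fib (y+1) := by
    have h := Nat.fib_add_two (n := y-1)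
    rw [show y-1+2 = y+1 by omega, show y-1+1 = y by omega] at h
    have : 1 ≤ Nat.fib (y-1) := Nat.fib_pos.mpr (by omega)
    omega
  have h3 : 2^k ≤ Nat.fib d := le_trans (fib_pow_le k) (Nat.fib_mono hdk)
  have h4 : 1 ≤ 2^k := Nat.one_le_two_pow
  rw [hidx, h1]
  nlinarith [Nat.fib_pos.mpr (show 0 < y by omega)]

section mult

variable {m q : ℕ} (hm : m % 2 = 1) (hq : 1 ≤ q)
include hm hq

lemma fr_gap (k : ℕ) :
    (Nat.fib (2*q*m) : ℝ) + 2^k ≤ (Nat.fib (m*(2*(k+1)+2*q)) : ℝ) := by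
  have := fib_gap (m := m) (q := q) (by omega) hq k
  exact_mod_cast this

lemma fr_pos (k : ℕ) : 0 < fr m q k := by
  have h := fr_gap hm hq k
  have h2 : (0:ℝ) < 2^k := by positivity
  have h3 : (0:ℝ) ≤ (Nat.fib (2*q*m) : ℝ) := by positivity
  unfold fr
  apply div_pos <;> linarith

lemma fr_one_le (k : ℕ) : 1 ≤ fr m q k := by
  have h := fr_gap hm hq k
  have h2 : (0:ℝ) < 2^k := by positivity
  have h3 : (0:ℝ) ≤ (Nat.fib (2*q*m) : ℝ) := by positivity
  unfold fr
  rw [le_div_iff₀ (by linarith)]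
  linarith

lemma fr_log_summable : Summable (fun k => Real.log (fr m q k)) := by
  have hc0 : (0:ℝ) ≤ (Nat.fib (2*q*m) : ℝ) := by positivity
  have hgeom : Summable (fun k : ℕ => (2*(Nat.fib (2*q*m):ℝ)) * (1/2)^k) :=
    (summable_geometric_of_lt_one (by norm_num) (by norm_num)).mul_left _
  refine Summable.of_nonneg_of_le (fun k => Real.log_nonneg (fr_one_le hm hq k))
    (fun k => ?_) hgeom
  have h := fr_gap hm hq k
  have h2 : (0:ℝ) < 2^k := by positivity
  have hlog := Real.log_le_sub_one_of_pos (fr_pos hm hq k)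
  have hsub : fr m q k - 1 = 2*(Nat.fib (2*q*m):ℝ) /
      ((Nat.fib (m*(2*(k+1)+2*q)) : ℝ) - (Nat.fib (2*q*m):ℝ)) := by
    unfold fr
    rw [div_sub_one (by linarith)]
    congr 1
    ring
  have hle : 2*(Nat.fib (2*q*m):ℝ) /
      ((Nat.fib (m*(2*(k+1)+2*q)) : ℝ) - (Nat.fib (2*q*m):ℝ))
      ≤ 2*(Nat.fib (2*q*m):ℝ) / 2^k :=
    div_le_div_of_nonneg_left (by linarith) h2 (by linarith)
  have heq : 2*(Nat.fib (2*q*m):ℝ) / 2^k = (2*(Nat.fib (2*q*m):ℝ)) * (1/2)^k := by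
    rw [div_pow, one_pow, mul_one_div]
  linarith

lemma fr_multipliable : Multipliable (fr m q) :=
  Real.multipliable_of_summable_log (fun k => fr_pos hm hq k) (fr_log_summable hm hq)

end mult

theorem stmt_11 (q n : ℕ) (hq : 0 < q) (hn : 0 < n) :
    ∏' k : ℕ,
        ((Nat.fib ((2 * n - 1) * (2 * (k + 1) + 2 * q)) : ℝ) + (Nat.fib (2 * q * (2 * n - 1)) : ℝ)) /
          ((Nat.fib ((2 * n - 1) * (2 * (k + 1) + 2 * q)) : ℝ) - (Nat.fib (2 * q * (2 * n - 1)) : ℝ)) =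
      ∏ k ∈ Finset.Icc 1 q,
        ((Nat.fib ((2 * n - 1) * (2 * k - 1)) : ℝ) * (lucas ((2 * n - 1) * (2 * k)) : ℝ)) /
          ((lucas ((2 * n - 1) * (2 * k - 1)) : ℝ) * (Nat.fib ((2 * n - 1) * (2 * k)) : ℝ)) := by
  set m := 2 * n - 1 with hmdef
  have hmo : m % 2 = 1 := by omega
  have hm1 : 1 ≤ m := by omega
  have hq1 : 1 ≤ q := hq
  have hmult : Multipliable (fr m q) := fr_multipliable hmo hq1
  have h1 : Tendsto (fun N => ∏ i ∈ range N, fr m q i) atTop (nhds (∏' k, fr m q k)) :=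
    hmult.hasProd.tendsto_prod_nat
  have hco : Tendsto (fun M : ℕ => 2 * M) atTop atTop :=
    tendsto_atTop_mono (fun M => by simp only [id_eq]; omega) tendsto_id
  have h2 : Tendsto (fun M => (∏ j ∈ range q, Hr m (j+1)) / (∏ j ∈ range q, Hr m (M+j+1)))
      atTop (nhds (∏' k, fr m q k)) := by
    apply (h1.comp hco).congr
    intro M
    simp only [Function.comp_apply]
    rw [partial_prod hmo, telescope hm1]
  have h4 : Tendsto (fun M => (∏ j ∈ range q, Hr m (j+1)) / (∏ j ∈ range q, Hr m (M+j+1)))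
      atTop (nhds ((∏ j ∈ range q, Hr m (j+1)) / 1)) :=
    tendsto_const_nhds.div (Hr_tail_tendsto hm1) one_ne_zero
  have hval : ∏' k, fr m q k = (∏ j ∈ range q, Hr m (j+1)) / 1 :=
    tendsto_nhds_unique h2 h4
  rw [div_one] at hval
  have hLHS : (∏' k : ℕ,
      ((Nat.fib (m * (2 * (k + 1) + 2 * q)) : ℝ) + (Nat.fib (2 * q * m) : ℝ)) /
        ((Nat.fib (m * (2 * (k + 1) + 2 * q)) : ℝ) - (Nat.fib (2 * q * m) : ℝ)))
      = ∏' k, fr m q k := rfl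
  rw [hLHS, hval, ← Finset.Ico_add_one_right_eq_Icc, Finset.prod_Ico_eq_prod_range]
  simp only [Nat.succ_sub_one, Nat.add_sub_cancel]
  refine Finset.prod_congr rfl fun i _ => ?_
  unfold Hr Gr
  rw [show 2*(i+1)-1 = 2*(1+i)-1 by omega, show 2*(i+1) = 2*(1+i) by omega]
  have h1' := (fibR_pos (j := m*(2*(1+i)-1)) (Nat.mul_pos hm1 (by omega))).ne'
  have h2' := (fibR_pos (j := m*(2*(1+i))) (Nat.mul_pos hm1 (by omega))).ne'
  have h3' := (lucR_pos (m*(2*(1+i)-1))).ne'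
  have h4' := (lucR_pos (m*(2*(1+i)))).ne'
  field_simp <;> ring
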